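/- Corollary E.1 (uniform outer set with multiple instruments). Let M be a positive natural number, let 𝒵 ⊆ ℝ^M, and for each m ∈ {1, …, M} let c_m ∈ [1, ∞) and let f_m, r_m : 𝒵 → ℝ satisfy, for every z ∈ 𝒵, r_m(z) ∈ [1/c_m, c_m] and f_m(z) = r_m(z)·θ(z), where θ : 𝒵 → ℝ. Then: (i) θ belongs to the intersection ∩_{m=1}^{M} Θ₁^m, i.e. for every m and every z ∈ 𝒵, θ(z) ∈ [f_m(z)/c_m, c_m·f_m(z)] if f_m(z) ≥ 0 and θ(z) ∈ [c_m·f_m(z), f_m(z)/c_m] if f_m(z) < 0; and (ii) for every θ̃ ∈ ∩_{m=1}^{M} Θ₁^m, sup_{z ∈ 𝒵} |θ(z) − θ̃(z)| ≤ min_{m ∈ {1,…,M}} ((c_m² − 1)/c_m) · sup_{z ∈ 𝒵} |f_m(z)| (as an inequality in [0, ∞]). -/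

import Mathlib

/-- Membership of `θ̃` in the uniform outer set `Θ₁^m` determined by the `m`-th LIV estimand
`f m` and constant `c m` on `𝒵 ⊆ ℝ^M`. -/
def MemTheta1 {M : ℕ} (𝒵 : Set (Fin M → ℝ)) (f : (Fin M → ℝ) → ℝ) (c : ℝ)
    (θt : (Fin M → ℝ) → ℝ) : Prop :=
  ∀ z ∈ 𝒵,
    (0 ≤ f z → θt z ∈ Set.Icc (f z / c) (c * f z)) ∧
    (f z < 0 → θt z ∈ Set.Icc (c * f z) (f z / c))

/-- **Corollary E.1, uniform outer set with multiple instruments.**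
If for each `m` the `m`-th ratio `r m` takes values in `[1/c_m, c_m]` and
`f_m(z) = r_m(z)·θ(z)` on `𝒵 ⊆ ℝ^M`, then (i) `θ ∈ ∩_m Θ₁^m`, and (ii) every
`θ̃ ∈ ∩_m Θ₁^m` satisfies
`sup_{z ∈ 𝒵} |θ(z) − θ̃(z)| ≤ min_m ((c_m² − 1)/c_m)·sup_{z ∈ 𝒵} |f_m(z)|` in `[0, ∞]`. -/
theorem stmt_18
    (M : ℕ) (hM : 0 < M) (𝒵 : Set (Fin M → ℝ))
    (c : Fin M → ℝ) (hc : ∀ m, 1 ≤ c m)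
    (f r : Fin M → (Fin M → ℝ) → ℝ) (θ : (Fin M → ℝ) → ℝ)
    (hr : ∀ m, ∀ z ∈ 𝒵, r m z ∈ Set.Icc (1 / c m) (c m))
    (hf : ∀ m, ∀ z ∈ 𝒵, f m z = r m z * θ z) :
    (∀ m, MemTheta1 𝒵 (f m) (c m) θ) ∧
    (∀ θt : (Fin M → ℝ) → ℝ, (∀ m, MemTheta1 𝒵 (f m) (c m) θt) →
      (⨆ z ∈ 𝒵, ENNReal.ofReal |θ z - θt z|)
        ≤ ⨅ m, ENNReal.ofReal ((c m ^ 2 - 1) / c m) *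
            ⨆ z ∈ 𝒵, ENNReal.ofReal |f m z|) := by
  have hθmem : ∀ m, MemTheta1 𝒵 (f m) (c m) θ := by
    intro m z hz
    have hc1 := hc m
    have hc0 : (0 : ℝ) < c m := lt_of_lt_of_le one_pos hc1
    obtain ⟨h1, h2⟩ := hr m z hz
    have hr0 : 0 < r m z := lt_of_lt_of_le (by positivity) h1
    have hfz := hf m z hz
    have hcr : 1 ≤ c m * r m z := by
      calc (1:ℝ) = c m * (1 / c m) := by field_simp
      _ ≤ c m * r m z := by
        exact mul_le_mul_of_nonneg_left h1 (le_of_lt hc0)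
    constructor
    · intro hf0
      have hθ0 : 0 ≤ θ z := nonneg_of_mul_nonneg_left (by linarith [hfz]) hr0
      constructor
      · rw [div_le_iff₀ hc0]
        nlinarith
      · nlinarith [mul_nonneg (sub_nonneg.2 hcr) hθ0]
    · intro hf0
      have hθ0 : θ z ≤ 0 := by nlinarith
      constructor
      · nlinarith [mul_nonpos_of_nonneg_of_nonpos (sub_nonneg.2 hcr) hθ0]
      · rw [le_div_iff₀ hc0]
        nlinarith
  refine ⟨hθmem, ?_⟩
  intro θt hθt
  refine le_iInf fun m => ?_
  refine iSup₂_le fun z hz => ?_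
  have hc1 := hc m
  have hc0 : (0 : ℝ) < c m := lt_of_lt_of_le one_pos hc1
  have hk0 : 0 ≤ (c m ^ 2 - 1) / c m := by
    apply div_nonneg _ hc0.le
    nlinarith
  have key : |θ z - θt z| ≤ (c m ^ 2 - 1) / c m * |f m z| := by
    obtain ⟨hA, hB⟩ := hθmem m z hz
    obtain ⟨hA', hB'⟩ := hθt m z hz
    have hid : (c m ^ 2 - 1) / c m * f m z = c m * f m z - f m z / c m := by
      field_simp
    rcases le_or_gt 0 (f m z) with hf0 | hf0
    · rw [abs_of_nonneg hf0]
      obtain ⟨a1, a2⟩ := hA hf0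
      obtain ⟨b1, b2⟩ := hA' hf0
      rw [abs_le]
      constructor <;> linarith
    · rw [abs_of_neg hf0]
      obtain ⟨a1, a2⟩ := hB hf0
      obtain ⟨b1, b2⟩ := hB' hf0
      have hid' : (c m ^ 2 - 1) / c m * (-f m z) = f m z / c m - c m * f m z := by
        field_simp; ring
      rw [abs_le]
      constructor <;> linarith
  calc ENNReal.ofReal |θ z - θt z|
      ≤ ENNReal.ofReal ((c m ^ 2 - 1) / c m * |f m z|) := ENNReal.ofReal_le_ofReal key
    _ = ENNReal.ofReal ((c m ^ 2 - 1) / c m) * ENNReal.ofReal |f m z| :=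
        ENNReal.ofReal_mul hk0
    _ ≤ ENNReal.ofReal ((c m ^ 2 - 1) / c m) * ⨆ z ∈ 𝒵, ENNReal.ofReal |f m z| := by
        gcongr
        exact le_iSup₂ (f := fun z (_ : z ∈ 𝒵) => ENNReal.ofReal |f m z|) z hz
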